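/- Let M be a loopless matroid on a finite nonempty ground set E. Then every M-ultrametric w admits a unique representation w = w^{S,α} with S a nested set of M and α : S → ℝ strictly compatible with S; that is, such a pair (S,α) exists, and if w = w^{S₁,α₁} = w^{S₂,α₂} with α₁, α₂ strictly compatible, then S₁ = S₂ and α₁ = α₂. -/

import Mathlib

variable {α : Type*}

/-- A circuit of `M`: a dependent subset of the ground set all of whose proper
subsets are independent. -/
def MCircuit (M : Matroid α) (C : Set α) : Prop :=
  C ⊆ M.E ∧ ¬ M.Indep C ∧ ∀ D : Set α, D ⊂ C → M.Indep D

/-- A matroid is connected if its ground set is nonempty and any two distinct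
elements of the ground set lie in a common circuit. -/
def MConnected (M : Matroid α) : Prop :=
  M.E.Nonempty ∧ ∀ a ∈ M.E, ∀ b ∈ M.E, a ≠ b → ∃ C, MCircuit M C ∧ a ∈ C ∧ b ∈ C

/-- The connected component of `e` in `M`: the equivalence class of `e` under the
relation "lying in a common circuit". -/
def MComponent (M : Matroid α) (e : α) : Set α :=
  {f ∈ M.E | f = e ∨ ∃ C, MCircuit M C ∧ e ∈ C ∧ f ∈ C}

/-- A nested set of `M`: a collection of nonempty connected flats containing every
connected component of `M`, such that the closure of the union of any ≥ 2 pairwise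
incomparable members induces a disconnected restriction. -/
def NestedSet (M : Matroid α) (S : Set (Set α)) : Prop :=
  (∀ F ∈ S, F.Nonempty ∧ M.IsFlat F ∧ MConnected (M.restrict F)) ∧
  (∀ e ∈ M.E, MComponent M e ∈ S) ∧
  (∀ T : Finset (Set α), ↑T ⊆ S → 2 ≤ T.card →
    (∀ F ∈ T, ∀ G ∈ T, F ≠ G → ¬ F ⊆ G ∧ ¬ G ⊆ F) →
    ¬ MConnected (M.restrict (M.closure (⋃ F ∈ T, F))))

/-- `a : S → ℝ` is compatible with `S`: weakly monotone with respect to inclusion. -/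
def Compat (S : Set (Set α)) (a : Set α → ℝ) : Prop :=
  ∀ F ∈ S, ∀ G ∈ S, F ⊆ G → a F ≤ a G

/-- `a : S → ℝ` is strictly compatible with `S`. -/
def StrictCompat (S : Set (Set α)) (a : Set α → ℝ) : Prop :=
  ∀ F ∈ S, ∀ G ∈ S, F ⊂ G → a F < a G

/-- `F` is the minimal member of `S` containing `e`. -/
def MinMem (S : Set (Set α)) (e : α) (F : Set α) : Prop :=
  F ∈ S ∧ e ∈ F ∧ ∀ G ∈ S, e ∈ G → F ⊆ G

/-- `w` is the vector `w^{S,a}`, i.e. `w e = a (F_e)` where `F_e` is the minimal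
member of `S` containing `e`, for every `e` in the ground set. -/
def Represents (M : Matroid α) (S : Set (Set α)) (a : Set α → ℝ) (w : α → ℝ) : Prop :=
  ∀ e ∈ M.E, ∃ F, MinMem S e F ∧ w e = a F

/-- The weight of a set `B` with respect to `w`. -/
noncomputable def bweight (w : α → ℝ) (B : Set α) : ℝ := ∑ᶠ e ∈ B, w e

/-- `B` is a `w`-minimum basis of `M`. -/
def MinBase (M : Matroid α) (w : α → ℝ) (B : Set α) : Prop :=
  M.IsBase B ∧ ∀ B', M.IsBase B' → bweight w B ≤ bweight w B'

/-- `w` is an `M`-ultrametric: every ground element lies in some `w`-minimum basis. -/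
def MUltrametric (M : Matroid α) (w : α → ℝ) : Prop :=
  ∀ e ∈ M.E, ∃ B, MinBase M w B ∧ e ∈ B

open Set

namespace MCircuit

variable {M : Matroid α} {C C₁ C₂ D X I : Set α} {e f g : α}

lemma subset_ground (h : MCircuit M C) : C ⊆ M.E := h.1

lemma dep (h : MCircuit M C) : ¬ M.Indep C := h.2.1

lemma ssubset_indep (h : MCircuit M C) (hD : D ⊂ C) : M.Indep D := h.2.2 D hD

lemma finite (hfin : M.E.Finite) (h : MCircuit M C) : C.Finite := hfin.subset h.1

lemma nonempty (h : MCircuit M C) : C.Nonempty := by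
  rcases C.eq_empty_or_nonempty with rfl | h'
  · exact absurd M.empty_indep h.dep
  · exact h'

lemma eq_of_subset (h₁ : MCircuit M C₁) (h₂ : MCircuit M C₂) (hss : C₁ ⊆ C₂) : C₁ = C₂ := by
  by_contra hne
  exact h₁.dep (h₂.ssubset_indep (ssubset_of_subset_of_ne hss hne))

lemma diff_singleton_indep (h : MCircuit M C) (he : e ∈ C) : M.Indep (C \ {e}) :=
  h.ssubset_indep (sdiff_singleton_ssubset.2 he)

/-- every finite dependent set contains a circuit -/
lemma exists_subset_circuit (hfin : M.E.Finite) (hX : X ⊆ M.E) (hdep : ¬ M.Indep X) :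
    ∃ C, MCircuit M C ∧ C ⊆ X := by
  have hXfin : X.Finite := hfin.subset hX
  suffices H : ∀ n (X : Set α), X.Finite → X.ncard ≤ n → X ⊆ M.E → ¬ M.Indep X →
      ∃ C, MCircuit M C ∧ C ⊆ X from H X.ncard X hXfin le_rfl hX hdep
  intro n
  induction n with
  | zero =>
    intro X hXf hc hXE hd
    rw [Nat.le_zero, Set.ncard_eq_zero hXf] at hc
    exact absurd (hc ▸ M.empty_indep) hd
  | succ n ih =>
    intro X hXf hc hXE hd
    by_cases hall : ∀ D, D ⊂ X → M.Indep D
    · exact ⟨X, ⟨hXE, hd, hall⟩, Subset.rfl⟩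
    · push_neg at hall
      obtain ⟨D, hDX, hDdep⟩ := hall
      obtain ⟨C, hC, hCD⟩ := ih D (hXf.subset hDX.subset)
        (by have := Set.ncard_lt_ncard hDX hXf; omega)
        (hDX.subset.trans hXE) hDdep
      exact ⟨C, hC, hCD.trans hDX.subset⟩

lemma exists_circuit_of_mem_closure (hfin : M.E.Finite) (hI : M.Indep I)
    (he : e ∈ M.closure I) (heI : e ∉ I) :
    ∃ C, MCircuit M C ∧ e ∈ C ∧ C ⊆ insert e I := by
  have heE : e ∈ M.E := M.closure_subset_ground I he
  have hdep : ¬ M.Indep (insert e I) := by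
    intro hind
    rw [hI.insert_indep_iff_of_notMem heI] at hind
    exact hind.2 he
  obtain ⟨C, hC, hCss⟩ := MCircuit.exists_subset_circuit hfin
    (insert_subset heE hI.subset_ground) hdep
  refine ⟨C, hC, ?_, hCss⟩
  by_contra heC
  exact hC.dep (hI.subset (by
    intro x hx
    rcases hCss hx with rfl | hxI
    · exact absurd hx heC
    · exact hxI))

lemma mem_closure_diff (h : MCircuit M C) (he : e ∈ C) : e ∈ M.closure (C \ {e}) := by
  have hI := h.diff_singleton_indep he
  have heE : e ∈ M.E := h.subset_ground he
  by_contra hcl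
  have : M.Indep (insert e (C \ {e})) := by
    rw [hI.insert_indep_iff_of_notMem (by simp)]
    exact ⟨heE, hcl⟩
  rw [insert_diff_singleton, insert_eq_of_mem he] at this
  exact h.dep this

end MCircuit

namespace MCircuit

variable {M : Matroid α} {C C₁ C₂ D X I R : Set α} {e f g a c : α}

lemma restrict_iff (hR : R ⊆ M.E) :
    MCircuit (M.restrict R) C ↔ MCircuit M C ∧ C ⊆ R := by
  constructor
  · rintro ⟨hCg, hdep, hmin⟩
    rw [Matroid.restrict_ground_eq] at hCg
    refine ⟨⟨hCg.trans hR, fun h => hdep (Matroid.restrict_indep_iff.2 ⟨h, hCg⟩), ?_⟩, hCg⟩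
    intro D hD
    exact (Matroid.restrict_indep_iff.1 (hmin D hD)).1
  · rintro ⟨⟨hCg, hdep, hmin⟩, hCR⟩
    refine ⟨by rwa [Matroid.restrict_ground_eq], fun h => hdep (Matroid.restrict_indep_iff.1 h).1,
      ?_⟩
    intro D hD
    exact Matroid.restrict_indep_iff.2 ⟨hmin D hD, hD.subset.trans hCR⟩

/-- weak circuit elimination -/
lemma weak_elim (hfin : M.E.Finite) (h₁ : MCircuit M C₁) (h₂ : MCircuit M C₂)
    (hne : C₁ ≠ C₂) (he : e ∈ C₁ ∪ C₂) :
    ∃ C, MCircuit M C ∧ C ⊆ (C₁ ∪ C₂) \ {e} := by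
  have hXE : C₁ ∪ C₂ ⊆ M.E := union_subset h₁.subset_ground h₂.subset_ground
  have hXfin : (C₁ ∪ C₂).Finite := hfin.subset hXE
  refine exists_subset_circuit hfin (diff_subset.trans hXE) ?_
  intro hind
  -- pick g ∈ C₁ \ C₂
  obtain ⟨g, hg₁, hg₂⟩ : ∃ g, g ∈ C₁ ∧ g ∉ C₂ := by
    by_contra hcon
    push_neg at hcon
    exact hne (h₁.eq_of_subset h₂ hcon)
  -- extend C₁ \ {g} to a basis I of X
  have hI₁ : M.Indep (C₁ \ {g}) := h₁.diff_singleton_indep hg₁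
  obtain ⟨I, hI, hssI⟩ := hI₁.subset_isBasis_of_subset
    (diff_subset.trans subset_union_left) hXE
  have hgI : g ∉ I := by
    intro hgI
    exact h₁.dep (hI.indep.subset (by
      intro x hx
      rcases eq_or_ne x g with rfl | hxg
      · exact hgI
      · exact hssI ⟨hx, hxg⟩))
  -- X \ {e} is a basis of X
  have hbas : M.IsBasis ((C₁ ∪ C₂) \ {e}) (C₁ ∪ C₂) := by
    refine hind.isBasis_of_forall_insert diff_subset ?_
    intro x hx
    have hxe : x = e := by
      by_contra hxe
      exact hx.2 ⟨hx.1, hxe⟩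
    subst hxe
    rw [insert_diff_singleton, insert_eq_of_mem he, Matroid.dep_iff]
    exact ⟨fun h => h₁.dep (h.subset subset_union_left), hXE⟩
  -- cardinalities
  have hcard : I.encard = ((C₁ ∪ C₂) \ {e}).encard := hI.encard_eq_encard hbas
  have hIX : I ⊆ (C₁ ∪ C₂) \ {g} := subset_diff_singleton hI.subset hgI
  have hcard₂ : ((C₁ ∪ C₂) \ {e}).encard = ((C₁ ∪ C₂) \ {g}).encard := by
    rw [Set.encard_diff_singleton_of_mem he,
      Set.encard_diff_singleton_of_mem (Set.mem_union_left _ hg₁)]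
  have hIeq : I = (C₁ ∪ C₂) \ {g} := by
    refine hXfin.diff.eq_of_subset_of_encard_le' hIX (le_of_eq ?_)
    rw [hcard, hcard₂]
  have hC₂I : C₂ ⊆ I := by
    rw [hIeq]
    exact subset_diff_singleton subset_union_right hg₂
  exact h₂.dep (hI.indep.subset hC₂I)

end MCircuit
namespace MCircuit

/-- strong circuit elimination -/
lemma strong_elim {M : Matroid α} {C₁ C₂ : Set α} {e f : α}
    (hfin : M.E.Finite) (h₁ : MCircuit M C₁) (h₂ : MCircuit M C₂)
    (he : e ∈ C₁ ∩ C₂) (hf : f ∈ C₁ \ C₂) :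
    ∃ C, MCircuit M C ∧ f ∈ C ∧ C ⊆ (C₁ ∪ C₂) \ {e} := by
  suffices H : ∀ n (C₁ C₂ : Set α), (C₁ ∪ C₂).ncard ≤ n → MCircuit M C₁ → MCircuit M C₂ →
      ∀ e f, e ∈ C₁ ∩ C₂ → f ∈ C₁ \ C₂ →
      ∃ C, MCircuit M C ∧ f ∈ C ∧ C ⊆ (C₁ ∪ C₂) \ {e} from
    H (C₁ ∪ C₂).ncard C₁ C₂ le_rfl h₁ h₂ e f he hf
  intro n
  induction n using Nat.strong_induction_on with
  | _ n ih =>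
    intro C₁ C₂ hcard h₁ h₂ e f he hf
    have hXfin : (C₁ ∪ C₂).Finite := hfin.subset (union_subset h₁.subset_ground h₂.subset_ground)
    have hne : C₁ ≠ C₂ := fun h => hf.2 (h ▸ hf.1)
    obtain ⟨D, hD, hDss⟩ := weak_elim hfin h₁ h₂ hne (mem_union_left _ he.1)
    by_cases hfD : f ∈ D
    · exact ⟨D, hD, hfD, hDss⟩
    -- pick g ∈ D \ C₁
    have heD : e ∉ D := fun h => (hDss h).2 rfl
    obtain ⟨g, hgD, hgC₁⟩ : ∃ g, g ∈ D ∧ g ∉ C₁ := by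
      by_contra hcon
      push_neg at hcon
      have : D ⊂ C₁ := ssubset_of_subset_of_ne hcon (fun h => heD (h ▸ he.1))
      exact hD.dep (h₁.ssubset_indep this)
    have hgC₂ : g ∈ C₂ := ((hDss hgD).1).resolve_left hgC₁
    -- first IH application : circuits C₂, D, common g, target e ∈ C₂ \ D
    have hsub1 : C₂ ∪ D ⊆ C₁ ∪ C₂ := union_subset subset_union_right
      (hDss.trans (diff_subset))
    have hflt : f ∉ C₂ ∪ D := by
      rintro (h | h)
      · exact hf.2 h
      · exact hfD h
    have hlt1 : (C₂ ∪ D).ncard < n := by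
      have : (C₂ ∪ D).ncard < (C₁ ∪ C₂).ncard :=
        Set.ncard_lt_ncard (ssubset_of_subset_of_ne hsub1
          (fun h => hflt (h ▸ mem_union_left _ hf.1))) hXfin
      omega
    obtain ⟨C₄, hC₄, heC₄, hC₄ss⟩ := ih _ hlt1 C₂ D le_rfl h₂ hD g e ⟨hgC₂, hgD⟩ ⟨he.2, heD⟩
    -- second IH application : circuits C₁, C₄, common e, target f
    have hC₄X : C₄ ⊆ C₁ ∪ C₂ := hC₄ss.trans (diff_subset.trans hsub1)
    have hgC₄ : g ∉ C₄ := fun h => (hC₄ss h).2 rfl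
    have hlt2 : (C₁ ∪ C₄).ncard < n := by
      have hsub2 : C₁ ∪ C₄ ⊆ C₁ ∪ C₂ := union_subset subset_union_left hC₄X
      have : (C₁ ∪ C₄).ncard < (C₁ ∪ C₂).ncard :=
        Set.ncard_lt_ncard (ssubset_of_subset_of_ne hsub2 (fun h => by
          have : g ∈ C₁ ∪ C₄ := h ▸ mem_union_right _ hgC₂
          rcases this with h' | h'
          · exact hgC₁ h'
          · exact hgC₄ h')) hXfin
      omega
    have hfC₄ : f ∉ C₄ := fun h => hflt (diff_subset (hC₄ss h))
    obtain ⟨C₃, hC₃, hfC₃, hC₃ss⟩ := ih _ hlt2 C₁ C₄ le_rfl h₁ hC₄ e f ⟨he.1, heC₄⟩ ⟨hf.1, hfC₄⟩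
    exact ⟨C₃, hC₃, hfC₃, hC₃ss.trans (diff_subset_diff_left
      (union_subset subset_union_left hC₄X))⟩

/-- transitivity of circuit connectivity -/
lemma conn_trans {M : Matroid α} {C₁ C₂ : Set α} {a c : α}
    (hfin : M.E.Finite) (h₁ : MCircuit M C₁) (h₂ : MCircuit M C₂)
    (ha : a ∈ C₁) (hc : c ∈ C₂) (hint : (C₁ ∩ C₂).Nonempty) :
    ∃ C, MCircuit M C ∧ a ∈ C ∧ c ∈ C := by
  by_contra hcon
  push_neg at hcon
  classical
  set P : Set α → Set α → Prop := fun D₁ D₂ =>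
    MCircuit M D₁ ∧ MCircuit M D₂ ∧ a ∈ D₁ ∧ c ∈ D₂ ∧ (D₁ ∩ D₂).Nonempty with hP
  have hPne : ∃ n, ∃ D₁ D₂, P D₁ D₂ ∧ (D₁ ∪ D₂).ncard = n :=
    ⟨_, C₁, C₂, ⟨h₁, h₂, ha, hc, hint⟩, rfl⟩
  obtain ⟨D₁, D₂, ⟨hD₁, hD₂, haD₁, hcD₂, hintD⟩, hDcard⟩ := Nat.find_spec hPne
  have hmin : ∀ E₁ E₂, P E₁ E₂ → Nat.find hPne ≤ (E₁ ∪ E₂).ncard := fun E₁ E₂ h =>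
    Nat.find_min' hPne ⟨E₁, E₂, h, rfl⟩
  have hXfin : (D₁ ∪ D₂).Finite :=
    hfin.subset (union_subset hD₁.subset_ground hD₂.subset_ground)
  have haD₂ : a ∉ D₂ := fun h => hcon D₂ hD₂ h hcD₂
  have hcD₁ : c ∉ D₁ := fun h => hcon D₁ hD₁ haD₁ h
  obtain ⟨e, heD⟩ := hintD
  obtain ⟨C₃, hC₃, haC₃, hC₃ss⟩ := strong_elim hfin hD₁ hD₂ heD ⟨haD₁, haD₂⟩
  obtain ⟨C₄, hC₄, hcC₄, hC₄ss⟩ := strong_elim hfin hD₂ hD₁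
    (by rwa [Set.inter_comm]) ⟨hcD₂, hcD₁⟩
  rw [union_comm] at hC₄ss
  have hcC₃ : c ∉ C₃ := fun h => hcon C₃ hC₃ haC₃ h
  have haC₄ : a ∉ C₄ := fun h => hcon C₄ hC₄ h hcC₄
  have heC₃ : e ∉ C₃ := fun h => (hC₃ss h).2 rfl
  have heC₄ : e ∉ C₄ := fun h => (hC₄ss h).2 rfl
  -- pick d ∈ C₃ \ D₁ ⊆ D₂
  obtain ⟨d, hdC₃, hdD₁⟩ : ∃ d, d ∈ C₃ ∧ d ∉ D₁ := by
    by_contra h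
    push_neg at h
    exact hC₃.dep (hD₁.ssubset_indep
      (ssubset_of_subset_of_ne h (fun hh => heC₃ (hh ▸ heD.1))))
  have hdD₂ : d ∈ D₂ := ((hC₃ss hdC₃).1).resolve_left hdD₁
  -- (D₁, C₄) is a witnessing pair
  have hC₄D₁ : (D₁ ∩ C₄).Nonempty := by
    obtain ⟨x, hxC₄, hxD₂⟩ : ∃ x, x ∈ C₄ ∧ x ∉ D₂ := by
      by_contra h
      push_neg at h
      exact hC₄.dep (hD₂.ssubset_indep
        (ssubset_of_subset_of_ne h (fun hh => heC₄ (hh ▸ heD.2))))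
    exact ⟨x, ((hC₄ss hxC₄).1).resolve_right hxD₂, hxC₄⟩
  have hpair : P D₁ C₄ := ⟨hD₁, hC₄, haD₁, hcC₄, hC₄D₁⟩
  have hsub : D₁ ∪ C₄ ⊆ D₁ ∪ D₂ := union_subset subset_union_left
    (hC₄ss.trans diff_subset)
  have heq : D₁ ∪ C₄ = D₁ ∪ D₂ := by
    refine Set.eq_of_subset_of_ncard_le hsub ?_ hXfin
    rw [hDcard]
    exact hmin _ _ hpair
  have hdC₄ : d ∈ C₄ := by
    have : d ∈ D₁ ∪ C₄ := heq ▸ mem_union_right _ hdD₂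
    exact this.resolve_left hdD₁
  -- (C₃, C₄) is a smaller witnessing pair : contradiction
  have hpair2 : P C₃ C₄ := ⟨hC₃, hC₄, haC₃, hcC₄, ⟨d, hdC₃, hdC₄⟩⟩
  have hss : C₃ ∪ C₄ ⊂ D₁ ∪ D₂ := by
    refine ssubset_of_subset_of_ne (union_subset (hC₃ss.trans diff_subset)
      (hC₄ss.trans diff_subset)) (fun h => ?_)
    have : e ∈ C₃ ∪ C₄ := h ▸ mem_union_left _ heD.1
    rcases this with h' | h'
    · exact heC₃ h'
    · exact heC₄ h'
  have := hmin _ _ hpair2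
  have := Set.ncard_lt_ncard hss hXfin
  omega

end MCircuit
section Components

variable {M N : Matroid α} {L L' G K C I : Set α} {e f g a b c : α}

lemma flat_closure (M : Matroid α) (X : Set α) : M.IsFlat (M.closure X) := by
  have hne : Nonempty ↥{F | M.IsFlat F ∧ X ∩ M.E ⊆ F} :=
    ⟨⟨M.E, M.ground_isFlat, Set.inter_subset_right⟩⟩
  have h := Matroid.IsFlat.iInter (M := M)
    (Fs := fun F : ↥{F | M.IsFlat F ∧ X ∩ M.E ⊆ F} => F.1) (fun F => F.2.1)
  rw [Matroid.closure_def, Set.sInter_eq_iInter]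
  exact h

lemma mem_mcomponent_iff :
    f ∈ MComponent N e ↔ f ∈ N.E ∧ (f = e ∨ ∃ C, MCircuit N C ∧ e ∈ C ∧ f ∈ C) := Iff.rfl

lemma mcomponent_subset_ground : MComponent N e ⊆ N.E := fun _ h => h.1

lemma self_mem_mcomponent (he : e ∈ N.E) : e ∈ MComponent N e := ⟨he, Or.inl rfl⟩

lemma mcomponent_symm_mem (hf : f ∈ MComponent N e) (he : e ∈ N.E) : e ∈ MComponent N f := by
  obtain ⟨hfE, rfl | ⟨C, hC, heC, hfC⟩⟩ := hf
  · exact self_mem_mcomponent he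
  · exact ⟨he, Or.inr ⟨C, hC, hfC, heC⟩⟩

lemma mcomponent_eq_of_mem (hfin : N.E.Finite) (hf : f ∈ MComponent N e) (he : e ∈ N.E) :
    MComponent N f = MComponent N e := by
  have key : ∀ x y : α, y ∈ MComponent N x → x ∈ N.E → MComponent N y ⊆ MComponent N x := by
    intro x y hy hx
    obtain ⟨hyE, rfl | ⟨C, hC, hxC, hyC⟩⟩ := hy
    · exact Set.Subset.rfl
    · rintro z ⟨hzE, rfl | ⟨D, hD, hyD, hzD⟩⟩
      · exact ⟨hzE, Or.inr ⟨C, hC, hxC, hyC⟩⟩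
      · rcases eq_or_ne z x with rfl | hzx
        · exact self_mem_mcomponent hx
        · obtain ⟨C', hC', hxC', hzC'⟩ :=
            MCircuit.conn_trans hfin hC hD hxC hzD ⟨y, hyC, hyD⟩
          exact ⟨hzE, Or.inr ⟨C', hC', hxC', hzC'⟩⟩
  exact (key e f hf he).antisymm (key f e (mcomponent_symm_mem hf he) (hf.1))

lemma circuit_subset_mcomponent (hC : MCircuit N C) (heC : e ∈ C) : C ⊆ MComponent N e :=
  fun x hx => ⟨hC.subset_ground hx, Or.inr ⟨C, hC, heC, hx⟩⟩

lemma mcomponent_connected (hfin : N.E.Finite) (he : e ∈ N.E) :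
    MConnected (N.restrict (MComponent N e)) := by
  set K := MComponent N e with hK
  refine ⟨⟨e, by rw [Matroid.restrict_ground_eq]; exact self_mem_mcomponent he⟩, ?_⟩
  intro x hx y hy hxy
  rw [Matroid.restrict_ground_eq] at hx hy
  -- x and y lie in a common circuit of N
  obtain ⟨C, hC, hxC, hyC⟩ : ∃ C, MCircuit N C ∧ x ∈ C ∧ y ∈ C := by
    obtain ⟨hxE, hxe | ⟨C₁, hC₁, heC₁, hxC₁⟩⟩ := hx
    · -- x = e
      obtain ⟨hyE, hye | ⟨C₂, hC₂, heC₂, hyC₂⟩⟩ := hy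
      · exact absurd (hye.trans hxe.symm) hxy.symm
      · exact ⟨C₂, hC₂, hxe ▸ heC₂, hyC₂⟩
    · obtain ⟨hyE, hye | ⟨C₂, hC₂, heC₂, hyC₂⟩⟩ := hy
      · exact ⟨C₁, hC₁, hxC₁, hye ▸ heC₁⟩
      · exact MCircuit.conn_trans hfin hC₁ hC₂ hxC₁ hyC₂ ⟨e, heC₁, heC₂⟩
  have hCK : C ⊆ K := by
    rw [hK, ← mcomponent_eq_of_mem hfin hx he]
    exact circuit_subset_mcomponent hC hxC
  exact ⟨C, (MCircuit.restrict_iff mcomponent_subset_ground).2 ⟨hC, hCK⟩, hxC, hyC⟩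

/-- a connected restriction is contained in the component of any of its elements -/
lemma connected_subset_mcomponent (hconn : MConnected (M.restrict G)) (hGL : G ⊆ L)
    (hLE : L ⊆ M.E) (he : e ∈ G) : G ⊆ MComponent (M.restrict L) e := by
  intro f hf
  rcases eq_or_ne f e with rfl | hfe
  · exact self_mem_mcomponent (by rw [Matroid.restrict_ground_eq]; exact hGL hf)
  · obtain ⟨C, hC, heC, hfC⟩ := hconn.2 e (by rwa [Matroid.restrict_ground_eq])
      f (by rwa [Matroid.restrict_ground_eq]) hfe.symm
    rw [MCircuit.restrict_iff (hGL.trans hLE)] at hC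
    refine ⟨by rw [Matroid.restrict_ground_eq]; exact hGL hf, Or.inr ⟨C, ?_, heC, hfC⟩⟩
    rw [MCircuit.restrict_iff hLE]
    exact ⟨hC.1, hC.2.trans hGL⟩

lemma mcomponent_mono (hLL' : L ⊆ L') (hL'E : L' ⊆ M.E) :
    MComponent (M.restrict L) e ⊆ MComponent (M.restrict L') e := by
  rintro f ⟨hfE, h⟩
  rw [Matroid.restrict_ground_eq] at hfE
  refine ⟨by rw [Matroid.restrict_ground_eq]; exact hLL' hfE, ?_⟩
  rcases h with rfl | ⟨C, hC, heC, hfC⟩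
  · exact Or.inl rfl
  · rw [MCircuit.restrict_iff (hLL'.trans hL'E)] at hC
    refine Or.inr ⟨C, ?_, heC, hfC⟩
    rw [MCircuit.restrict_iff hL'E]
    exact ⟨hC.1, hC.2.trans hLL'⟩

/-- components of the restriction to a flat of a loopless matroid are flats -/
lemma mcomponent_flat (hfin : M.E.Finite) (hloop : ∀ x ∈ M.E, M.Indep {x})
    (hL : M.IsFlat L) (he : e ∈ L) : M.IsFlat (MComponent (M.restrict L) e) := by
  set K := MComponent (M.restrict L) e with hK
  have hLE : L ⊆ M.E := hL.subset_ground
  have hKL : K ⊆ L := by rw [hK]; intro x hx; have h' := hx.1; rwa [Matroid.restrict_ground_eq] at h'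
  have hKE : K ⊆ M.E := hKL.trans hLE
  suffices hcl : M.closure K = K by rw [← hcl]; exact flat_closure M K
  refine Set.Subset.antisymm ?_ (M.subset_closure K hKE)
  intro g hg
  have hgL : g ∈ L := by
    rw [← hL.closure]
    exact M.closure_subset_closure hKL hg
  by_contra hgK
  obtain ⟨I, hI⟩ := M.exists_isBasis K hKE
  rw [← hI.closure_eq_closure] at hg
  have hgI : g ∉ I := fun h => hgK (hI.subset h)
  obtain ⟨C, hC, hgC, hCss⟩ := MCircuit.exists_circuit_of_mem_closure hfin hI.indep hg hgI
  -- C has a second element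
  obtain ⟨x, hxC, hxg⟩ : ∃ x, x ∈ C ∧ x ≠ g := by
    by_contra h
    push_neg at h
    have hCg : C = {g} := Set.eq_singleton_iff_nonempty_unique_mem.2 ⟨hC.nonempty, h⟩
    exact hC.dep (hCg ▸ hloop g (hLE hgL))
  have hxI : x ∈ I := by
    rcases hCss hxC with rfl | h
    · exact absurd rfl hxg
    · exact h
  have hxK : x ∈ K := hI.subset hxI
  have hCL : C ⊆ L := hCss.trans (Set.insert_subset hgL (hI.subset.trans hKL))
  have hCres : MCircuit (M.restrict L) C := (MCircuit.restrict_iff hLE).2 ⟨hC, hCL⟩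
  have hLfin : (M.restrict L).E.Finite := by rw [Matroid.restrict_ground_eq]; exact hfin.subset hLE
  have : g ∈ MComponent (M.restrict L) x := circuit_subset_mcomponent hCres hxC hgC
  rw [mcomponent_eq_of_mem hLfin hxK (by rw [Matroid.restrict_ground_eq]; exact he)] at this
  exact hgK this

/-- the restriction of M to a component of M|L is connected -/
lemma mcomponent_restrict_connected (hfin : M.E.Finite) (hLE : L ⊆ M.E) (he : e ∈ L) :
    MConnected (M.restrict (MComponent (M.restrict L) e)) := by
  have hLfin : (M.restrict L).E.Finite := by rw [Matroid.restrict_ground_eq]; exact hfin.subset hLE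
  have h := mcomponent_connected (N := M.restrict L) hLfin
    (by rw [Matroid.restrict_ground_eq]; exact he)
  rwa [Matroid.restrict_restrict_eq _ (mcomponent_subset_ground.trans_eq
    (Matroid.restrict_ground_eq))] at h

end Components
section MinBasis

variable {M : Matroid α} {w : α → ℝ} {B X : Set α} {a e f : α}

lemma bweight_finset (w : α → ℝ) (B : Set α) (hB : B.Finite) :
    bweight w B = ∑ x ∈ hB.toFinset, w x := by
  rw [bweight, ← finsum_mem_coe_finset, Set.Finite.coe_toFinset]

lemma bweight_insert (hB : B.Finite) (ha : a ∉ B) :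
    bweight w (insert a B) = w a + bweight w B := by
  classical
  rw [bweight_finset w _ (hB.insert a), bweight_finset w B hB,
    Set.Finite.toFinset_insert, Finset.sum_insert (by simpa using ha)]

lemma bweight_diff_singleton (hB : B.Finite) (he : e ∈ B) :
    bweight w B = w e + bweight w (B \ {e}) := by
  have h : B = insert e (B \ {e}) := by
    rw [Set.insert_diff_singleton, Set.insert_eq_of_mem he]
  nth_rewrite 1 [h]
  rw [bweight_insert (hB.diff) (by simp)]

/-- an element of a minimum-weight basis is not spanned by strictly lighter elements -/
lemma MinBase.not_mem_closure_lt (hfin : M.E.Finite) (hB : MinBase M w B) (he : e ∈ B) :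
    e ∉ M.closure {f ∈ M.E | w f < w e} := by
  intro hecl
  set X : Set α := {f ∈ M.E | w f < w e} with hX
  have hBE : B ⊆ M.E := hB.1.subset_ground
  have hBfin : B.Finite := hfin.subset hBE
  have hBd_ind : M.Indep (B \ {e}) := hB.1.indep.subset Set.diff_subset
  have hencl : e ∉ M.closure (B \ {e}) := hB.1.indep.notMem_closure_diff_of_mem he
  obtain ⟨f, hfX, hfcl⟩ : ∃ f, f ∈ X ∧ f ∉ M.closure (B \ {e}) := by
    by_contra h
    push_neg at h
    exact hencl ((M.closure_subset_closure_of_subset_closure h) hecl)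
  have hfE : f ∈ M.E := hfX.1
  have hfwe : w f < w e := hfX.2
  have hfBd : f ∉ B \ {e} := fun h => hfcl (M.subset_closure _ (Set.diff_subset.trans hBE) h)
  have hfB : f ∉ B := by
    intro h
    exact hfBd ⟨h, fun hfe => absurd (hfe ▸ hfwe) (lt_irrefl _)⟩
  have hins : M.Indep (insert f (B \ {e})) := by
    rw [hBd_ind.insert_indep_iff_of_notMem hfBd]
    exact ⟨hfE, hfcl⟩
  have hB' : M.IsBase (insert f (B \ {e})) := hB.1.exchange_isBase_of_indep hfB hins
  have hwt : bweight w (insert f (B \ {e})) < bweight w B := by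
    rw [bweight_insert (hBfin.diff) hfBd, bweight_diff_singleton hBfin he]
    linarith
  exact absurd (hB.2 _ hB') (not_le.2 hwt)

/-- sublevel sets of an ultrametric are flats -/
lemma sublevel_flat (hfin : M.E.Finite) (hw : MUltrametric M w) (t : ℝ) :
    M.IsFlat {f ∈ M.E | w f ≤ t} := by
  set X : Set α := {f ∈ M.E | w f ≤ t} with hX
  suffices hcl : M.closure X = X by rw [← hcl]; exact flat_closure M X
  refine Set.Subset.antisymm ?_ (M.subset_closure X (Set.sep_subset _ _))
  intro g hg
  have hgE : g ∈ M.E := M.closure_subset_ground X hg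
  refine ⟨hgE, ?_⟩
  by_contra hgt
  push_neg at hgt
  have hXss : X ⊆ {f ∈ M.E | w f < w g} := fun x hx => ⟨hx.1, lt_of_le_of_lt hx.2 hgt⟩
  obtain ⟨B, hB, hgB⟩ := hw g hgE
  exact hB.not_mem_closure_lt hfin hgB (M.closure_subset_closure hXss hg)

end MinBasis
section Canonical

variable {M : Matroid α} {w : α → ℝ} {K K₁ K₂ F G : Set α} {e f g x : α} {s t : ℝ}

/-- the sublevel set -/
def Lset (M : Matroid α) (w : α → ℝ) (t : ℝ) : Set α := {f ∈ M.E | w f ≤ t}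

/-- the canonical nested set : all components of all sublevel flats -/
def CanonS (M : Matroid α) (w : α → ℝ) : Set (Set α) :=
  {K | ∃ t, ∃ e ∈ Lset M w t, K = MComponent (M.restrict (Lset M w t)) e}

/-- the canonical weighting : the maximum of `w` over the set -/
noncomputable def maxw (w : α → ℝ) (F : Set α) : ℝ := sSup (w '' F)

lemma Lset_subset_ground : Lset M w t ⊆ M.E := Set.sep_subset _ _

lemma Lset_mono (hst : s ≤ t) : Lset M w s ⊆ Lset M w t :=
  fun _ hx => ⟨hx.1, hx.2.trans hst⟩

lemma mem_Lset : e ∈ Lset M w t ↔ e ∈ M.E ∧ w e ≤ t := Iff.rfl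

lemma maxw_isGreatest (hF : F.Finite) (hne : F.Nonempty) : IsGreatest (w '' F) (maxw w F) := by
  obtain ⟨b, hbF, hb⟩ := Set.exists_max_image F w hF hne
  have hg : IsGreatest (w '' F) (w b) := by
    constructor
    · exact Set.mem_image_of_mem w hbF
    · rintro y ⟨x, hx, rfl⟩; exact hb x hx
  rwa [maxw, hg.csSup_eq]

lemma maxw_le (hF : F.Finite) (hne : F.Nonempty) (h : ∀ x ∈ F, w x ≤ t) : maxw w F ≤ t := by
  obtain ⟨⟨x, hx, hxe⟩, -⟩ := maxw_isGreatest (w := w) hF hne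
  rw [← hxe]; exact h x hx

lemma le_maxw (hF : F.Finite) (hne : F.Nonempty) (hx : x ∈ F) : w x ≤ maxw w F :=
  (maxw_isGreatest hF hne).2 (Set.mem_image_of_mem w hx)

lemma maxw_mem (hF : F.Finite) (hne : F.Nonempty) : ∃ x ∈ F, w x = maxw w F := by
  obtain ⟨⟨x, hx, hxe⟩, -⟩ := maxw_isGreatest (w := w) hF hne
  exact ⟨x, hx, hxe⟩

variable (hfin : M.E.Finite) (hloop : ∀ x ∈ M.E, M.Indep {x}) (hw : MUltrametric M w)

section basic

include hfin hw

lemma CanonS_subset_Lset (hK : K ∈ CanonS M w) : K ⊆ Lset M w (maxw w K) := by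
  obtain ⟨t, e, he, rfl⟩ := hK
  set K := MComponent (M.restrict (Lset M w t)) e with hKdef
  have hKL : K ⊆ Lset M w t := by
    intro x hx
    have h := hx.1
    rwa [Matroid.restrict_ground_eq] at h
  have hKfin : K.Finite := hfin.subset (hKL.trans Lset_subset_ground)
  have hKne : K.Nonempty := ⟨e, self_mem_mcomponent (by rwa [Matroid.restrict_ground_eq])⟩
  intro x hx
  exact ⟨(hKL hx).1, le_maxw hKfin hKne hx⟩

lemma CanonS_nonempty (hK : K ∈ CanonS M w) : K.Nonempty := by
  obtain ⟨t, e, he, rfl⟩ := hK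
  exact ⟨e, self_mem_mcomponent (by rwa [Matroid.restrict_ground_eq])⟩

lemma CanonS_finite (hK : K ∈ CanonS M w) : K.Finite :=
  hfin.subset ((CanonS_subset_Lset hfin hw hK).trans Lset_subset_ground)

lemma CanonS_connected (hK : K ∈ CanonS M w) : MConnected (M.restrict K) := by
  obtain ⟨t, e, he, rfl⟩ := hK
  exact mcomponent_restrict_connected hfin Lset_subset_ground he

include hloop in
lemma CanonS_flat (hK : K ∈ CanonS M w) : M.IsFlat K := by
  obtain ⟨t, e, he, rfl⟩ := hK
  exact mcomponent_flat hfin hloop (sublevel_flat hfin hw t) he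

/-- normalization : each canonical member is the component of each of its points
at its own max level -/
lemma CanonS_norm (hK : K ∈ CanonS M w) (hx : x ∈ K) :
    K = MComponent (M.restrict (Lset M w (maxw w K))) x := by
  obtain ⟨t, e, he, rfl⟩ := hK
  set K := MComponent (M.restrict (Lset M w t)) e with hKdef
  set m := maxw w K with hm
  have hKLm : K ⊆ Lset M w m := CanonS_subset_Lset hfin hw ⟨t, e, he, rfl⟩
  have hconn : MConnected (M.restrict K) := CanonS_connected hfin hw ⟨t, e, he, rfl⟩
  have hsub : K ⊆ MComponent (M.restrict (Lset M w m)) x :=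
    connected_subset_mcomponent hconn hKLm Lset_subset_ground hx
  refine hsub.antisymm ?_
  set C := MComponent (M.restrict (Lset M w m)) x with hC
  have hCconn : MConnected (M.restrict C) :=
    mcomponent_restrict_connected hfin Lset_subset_ground (hKLm hx)
  have hmt : m ≤ t := by
    refine maxw_le (CanonS_finite hfin hw ⟨t, e, he, rfl⟩)
      (CanonS_nonempty hfin hw ⟨t, e, he, rfl⟩) ?_
    intro y hy
    have h := hy.1
    rw [Matroid.restrict_ground_eq] at h
    exact h.2
  have hCL : C ⊆ Lset M w t := by
    intro y hy
    have h := hy.1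
    rw [Matroid.restrict_ground_eq] at h
    exact Lset_mono hmt h
  have hsub2 : C ⊆ MComponent (M.restrict (Lset M w t)) x :=
    connected_subset_mcomponent hCconn hCL Lset_subset_ground
      (self_mem_mcomponent (by rw [Matroid.restrict_ground_eq]; exact hKLm hx))
  have hLtfin : (M.restrict (Lset M w t)).E.Finite := by
    rw [Matroid.restrict_ground_eq]; exact hfin.subset Lset_subset_ground
  rwa [mcomponent_eq_of_mem hLtfin hx (by rwa [Matroid.restrict_ground_eq])] at hsub2

/-- a connected member of S sitting inside `Lset t` and meeting a canonical member
of level `t` is contained in it -/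
lemma conn_subset_canon (hG : MConnected (M.restrict G)) (hGL : G ⊆ Lset M w (maxw w K))
    (hK : K ∈ CanonS M w) (hx : x ∈ G) (hxK : x ∈ K) : G ⊆ K := by
  rw [CanonS_norm hfin hw hK hxK]
  exact connected_subset_mcomponent hG hGL Lset_subset_ground hx

/-- two canonical members are nested or disjoint -/
lemma CanonS_nested (h₁ : K₁ ∈ CanonS M w) (h₂ : K₂ ∈ CanonS M w)
    (hx : (K₁ ∩ K₂).Nonempty) : K₁ ⊆ K₂ ∨ K₂ ⊆ K₁ := by
  obtain ⟨x, hx₁, hx₂⟩ := hx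
  rcases le_total (maxw w K₁) (maxw w K₂) with h | h
  · exact Or.inl (conn_subset_canon hfin hw (CanonS_connected hfin hw h₁)
      ((CanonS_subset_Lset hfin hw h₁).trans (Lset_mono h)) h₂ hx₁ hx₂)
  · exact Or.inr (conn_subset_canon hfin hw (CanonS_connected hfin hw h₂)
      ((CanonS_subset_Lset hfin hw h₂).trans (Lset_mono h)) h₁ hx₂ hx₁)

/-- strict monotonicity of maxw on canonical members -/
lemma CanonS_maxw_lt (h₁ : K₁ ∈ CanonS M w) (h₂ : K₂ ∈ CanonS M w) (hss : K₁ ⊂ K₂) :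
    maxw w K₁ < maxw w K₂ := by
  by_contra h
  push_neg at h
  obtain ⟨x, hx₁⟩ := CanonS_nonempty hfin hw h₁
  have : K₂ ⊆ K₁ := conn_subset_canon hfin hw (CanonS_connected hfin hw h₂)
    ((CanonS_subset_Lset hfin hw h₂).trans (Lset_mono h)) h₁ (hss.subset hx₁) hx₁
  exact hss.not_subset this

/-- the canonical minimal member containing `e` -/
lemma CanonS_minmem (he : e ∈ M.E) :
    MinMem (CanonS M w) e (MComponent (M.restrict (Lset M w (w e))) e) ∧
      maxw w (MComponent (M.restrict (Lset M w (w e))) e) = w e := by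
  have heL : e ∈ Lset M w (w e) := ⟨he, le_rfl⟩
  set Ke := MComponent (M.restrict (Lset M w (w e))) e with hKe
  have hKm : Ke ∈ CanonS M w := ⟨w e, e, heL, rfl⟩
  have heKe : e ∈ Ke := self_mem_mcomponent (by rwa [Matroid.restrict_ground_eq])
  have hfinK := CanonS_finite hfin hw hKm
  have hneK : Ke.Nonempty := ⟨e, heKe⟩
  have hmax : maxw w Ke = w e := by
    refine le_antisymm (maxw_le hfinK hneK ?_) (le_maxw hfinK hneK heKe)
    intro y hy
    have h := hy.1
    rw [Matroid.restrict_ground_eq] at h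
    exact h.2
  refine ⟨⟨hKm, heKe, ?_⟩, hmax⟩
  intro G hG heG
  have hwG : w e ≤ maxw w G := le_maxw (CanonS_finite hfin hw hG) ⟨e, heG⟩ heG
  refine conn_subset_canon hfin hw (CanonS_connected hfin hw hKm) ?_ hG heKe heG
  exact (CanonS_subset_Lset hfin hw hKm).trans (by rw [hmax]; exact Lset_mono hwG)

end basic

end Canonical
section CanonNested

variable {M : Matroid α} {w : α → ℝ} {K F G : Set α} {e : α} {t : ℝ}

variable (hfin : M.E.Finite) (hne : M.E.Nonempty) (hloop : ∀ x ∈ M.E, M.Indep {x})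
  (hw : MUltrametric M w)

include hfin hne in
lemma Lset_max_eq : Lset M w (maxw w M.E) = M.E := by
  refine Set.Subset.antisymm Lset_subset_ground ?_
  intro x hx
  exact ⟨hx, le_maxw hfin hne hx⟩

include hfin hne in
lemma mcomponent_mem_CanonS (he : e ∈ M.E) : MComponent M e ∈ CanonS M w := by
  refine ⟨maxw w M.E, e, ?_, ?_⟩
  · rw [Lset_max_eq hfin hne]; exact he
  · rw [Lset_max_eq hfin hne, Matroid.restrict_ground_eq_self]

include hfin hw in
lemma CanonS_incomp_disconnected (T : Finset (Set α)) (hTS : ↑T ⊆ CanonS M w)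
    (hT2 : 2 ≤ T.card)
    (hinc : ∀ F ∈ T, ∀ G ∈ T, F ≠ G → ¬ F ⊆ G ∧ ¬ G ⊆ F) :
    ¬ MConnected (M.restrict (M.closure (⋃ F ∈ T, F))) := by
  -- pick the member with the largest max weight
  have hTne : T.Nonempty := Finset.card_pos.1 (by omega)
  obtain ⟨Fm, hFmT, hFmmax⟩ := T.exists_max_image (maxw w) hTne
  have hFm : Fm ∈ CanonS M w := hTS hFmT
  set m := maxw w Fm with hm
  -- the union is inside Lset m
  have hUL : (⋃ F ∈ T, F) ⊆ Lset M w m := by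
    refine Set.iUnion₂_subset ?_
    intro F hF
    exact (CanonS_subset_Lset hfin hw (hTS hF)).trans (Lset_mono (hFmmax F hF))
  set X := M.closure (⋃ F ∈ T, F) with hX
  have hXL : X ⊆ Lset M w m := by
    have h1 : M.closure (Lset M w m) = Lset M w m := (sublevel_flat hfin hw m).closure
    rw [hX, ← h1]
    exact M.closure_subset_closure hUL
  -- pick another member G and points
  obtain ⟨G, hGT, hGne⟩ : ∃ G ∈ T, G ≠ Fm := by
    obtain ⟨x, y, hx, hy, hxy⟩ := Finset.one_lt_card_iff.1 (show 1 < T.card by omega)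
    rcases eq_or_ne x Fm with rfl | hxF
    · exact ⟨y, hy, fun h => hxy (h ▸ rfl)⟩
    · exact ⟨x, hx, hxF⟩
  obtain ⟨a, haF⟩ := CanonS_nonempty hfin hw hFm
  obtain ⟨b, hbG⟩ := CanonS_nonempty hfin hw (hTS hGT)
  have hdisj : b ∉ Fm := by
    intro hbF
    rcases CanonS_nested hfin hw (hTS hGT) hFm ⟨b, hbG, hbF⟩ with h | h
    · exact (hinc G hGT Fm hFmT hGne).1 h
    · exact (hinc G hGT Fm hFmT hGne).2 h
  have hab : a ≠ b := fun h => hdisj (h ▸ haF)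
  have hUE : (⋃ F ∈ T, F) ⊆ M.E := hUL.trans Lset_subset_ground
  have haX : a ∈ X := M.subset_closure _ hUE (Set.mem_biUnion hFmT haF)
  have hbX : b ∈ X := M.subset_closure _ hUE (Set.mem_biUnion hGT hbG)
  rintro ⟨-, hpairs⟩
  obtain ⟨C, hC, haC, hbC⟩ := hpairs a (by rwa [Matroid.restrict_ground_eq])
    b (by rwa [Matroid.restrict_ground_eq]) hab
  rw [MCircuit.restrict_iff (M.closure_subset_ground _)] at hC
  -- the circuit C lies in Lset m, hence in the component Fm of a
  have hCL : C ⊆ Lset M w m := hC.2.trans hXL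
  have hCres : MCircuit (M.restrict (Lset M w m)) C :=
    (MCircuit.restrict_iff Lset_subset_ground).2 ⟨hC.1, hCL⟩
  have hbF : b ∈ Fm := by
    rw [CanonS_norm hfin hw hFm haF]
    exact circuit_subset_mcomponent hCres haC hbC
  exact hdisj hbF

include hfin hne hloop hw in
lemma CanonS_nestedSet : NestedSet M (CanonS M w) := by
  refine ⟨?_, ?_, ?_⟩
  · intro F hF
    exact ⟨CanonS_nonempty hfin hw hF, CanonS_flat hfin hloop hw hF,
      CanonS_connected hfin hw hF⟩
  · intro e he
    exact mcomponent_mem_CanonS hfin hne he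
  · exact CanonS_incomp_disconnected hfin hw

include hfin hw in
lemma CanonS_strictCompat : StrictCompat (CanonS M w) (maxw w) := by
  intro F hF G hG hss
  exact CanonS_maxw_lt hfin hw hF hG hss

include hfin hw in
lemma CanonS_represents : Represents M (CanonS M w) (maxw w) w := by
  intro e he
  obtain ⟨hmm, hmax⟩ := CanonS_minmem hfin hw he
  exact ⟨_, hmm, hmax.symm⟩

end CanonNested
section Uniqueness

variable {M : Matroid α} {w : α → ℝ} {S : Set (Set α)} {a : Set α → ℝ}
  {K F G : Set α} {e g : α}

variable (hfin : M.E.Finite) (hne : M.E.Nonempty) (hloop : ∀ x ∈ M.E, M.Indep {x})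
  (hw : MUltrametric M w)

lemma NestedSet.member_subset_ground (hS : NestedSet M S) (hF : F ∈ S) : F ⊆ M.E :=
  (hS.1 F hF).2.1.subset_ground

include hfin in
lemma NestedSet.finite (hS : NestedSet M S) : S.Finite :=
  hfin.finite_subsets.subset (fun F hF => hS.member_subset_ground hF)

lemma NestedSet.compat (hS : NestedSet M S) (hsc : StrictCompat S a)
    (hF : F ∈ S) (hG : G ∈ S) (hss : G ⊆ F) : a G ≤ a F := by
  rcases eq_or_ne G F with rfl | hne'
  · exact le_rfl
  · exact le_of_lt (hsc G hG F hF (ssubset_of_subset_of_ne hss hne'))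

/-- all weights in a member are at most its label -/
lemma NestedSet.w_le (hS : NestedSet M S) (hsc : StrictCompat S a)
    (hrep : Represents M S a w) (hF : F ∈ S) (he : e ∈ F) : w e ≤ a F := by
  obtain ⟨G, hG, hwG⟩ := hrep e (hS.member_subset_ground hF he)
  rw [hwG]
  exact hS.compat hsc hF hG.1 (hG.2.2 F hF he)

include hfin in
/-- a connected flat covered by proper members of a nested set : impossible -/
lemma NestedSet.cover_contra (hS : NestedSet M S) (hFne : F.Nonempty)
    (hcl : M.closure F = F) (hconn : MConnected (M.restrict F))
    (hcov : ∀ e ∈ F, ∃ G, G ∈ S ∧ e ∈ G ∧ G ⊆ F ∧ G ≠ F) : False := by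
  classical
  set 𝒢 : Set (Set α) := {G ∈ S | G ⊆ F ∧ G ≠ F} with h𝒢
  have h𝒢fin : 𝒢.Finite := (hS.finite hfin).subset (Set.sep_subset _ _)
  set ℳ : Set (Set α) := {G ∈ 𝒢 | ∀ H ∈ 𝒢, G ⊆ H → G = H} with hℳ
  have hmaxsup : ∀ G ∈ 𝒢, ∃ H ∈ ℳ, G ⊆ H := by
    intro G hG
    set s : Set (Set α) := {H ∈ 𝒢 | G ⊆ H} with hs
    obtain ⟨H, hHs, hmax⟩ := Set.Finite.exists_maximalFor id s
      (h𝒢fin.subset (Set.sep_subset _ _)) ⟨G, hG, Set.Subset.rfl⟩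
    refine ⟨H, ⟨hHs.1, ?_⟩, hHs.2⟩
    intro H' hH' hss
    exact hss.antisymm (hmax ⟨hH', hHs.2.trans hss⟩ hss)
  have hℳfin : ℳ.Finite := h𝒢fin.subset (Set.sep_subset _ _)
  set T : Finset (Set α) := hℳfin.toFinset with hT
  have hTS : ↑T ⊆ S := by
    intro G hG
    rw [hT, Set.Finite.coe_toFinset] at hG
    exact hG.1.1
  have hUnion : (⋃ F' ∈ T, F') = F := by
    apply Set.Subset.antisymm
    · refine Set.iUnion₂_subset ?_
      intro G hG
      rw [hT, Set.Finite.mem_toFinset] at hG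
      exact hG.1.2.1
    · intro e he
      obtain ⟨G, hG, heG, hGF, hGne⟩ := hcov e he
      obtain ⟨H, hH, hGH⟩ := hmaxsup G ⟨hG, hGF, hGne⟩
      exact Set.mem_biUnion (show H ∈ T from (Set.Finite.mem_toFinset hℳfin).2 hH) (hGH heG)
  have hTne : T.Nonempty := by
    obtain ⟨e, he⟩ := hFne
    obtain ⟨G, hG, heG, hGF, hGne⟩ := hcov e he
    obtain ⟨H, hH, -⟩ := hmaxsup G ⟨hG, hGF, hGne⟩
    exact ⟨H, by rw [hT, Set.Finite.mem_toFinset]; exact hH⟩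
  have hT2 : 2 ≤ T.card := by
    by_contra h
    push_neg at h
    interval_cases hc : T.card
    · exact Finset.card_ne_zero_of_mem hTne.choose_spec hc
    · obtain ⟨H₀, hTH⟩ := Finset.card_eq_one.1 hc
      have hH₀ : H₀ ∈ ℳ := by
        have hmem : H₀ ∈ T := by rw [hTH]; exact Finset.mem_singleton_self _
        rw [hT, Set.Finite.mem_toFinset] at hmem
        exact hmem
      have : (⋃ F' ∈ T, F') = H₀ := by rw [hTH]; simp
      exact hH₀.1.2.2 (this ▸ hUnion)
  have hinc : ∀ F₁ ∈ T, ∀ G₁ ∈ T, F₁ ≠ G₁ → ¬ F₁ ⊆ G₁ ∧ ¬ G₁ ⊆ F₁ := by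
    intro F₁ hF₁ G₁ hG₁ hne'
    rw [hT, Set.Finite.mem_toFinset] at hF₁ hG₁
    exact ⟨fun h => hne' (hF₁.2 G₁ hG₁.1 h), fun h => hne'.symm (hG₁.2 F₁ hF₁.1 h)⟩
  have := hS.2.2 T hTS hT2 hinc
  rw [hUnion, hcl] at this
  exact this hconn

include hfin in
/-- the label of each member is the max of `w` over it, attained by an element whose
minimal member is the member itself -/
lemma NestedSet.label_eq_maxw (hS : NestedSet M S) (hsc : StrictCompat S a)
    (hrep : Represents M S a w) (hF : F ∈ S) :
    a F = maxw w F ∧ ∃ e ∈ F, w e = a F := by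
  have hFE : F ⊆ M.E := hS.member_subset_ground hF
  have hFne : F.Nonempty := (hS.1 F hF).1
  have hFfin : F.Finite := hfin.subset hFE
  have hex : ∃ e ∈ F, w e = a F := by
    by_contra h
    push_neg at h
    refine hS.cover_contra hfin hFne (hS.1 F hF).2.1.closure (hS.1 F hF).2.2 ?_
    intro e he
    obtain ⟨G, hG, hwG⟩ := hrep e (hFE he)
    refine ⟨G, hG.1, hG.2.1, hG.2.2 F hF he, ?_⟩
    intro hGF
    exact h e he (by rw [hwG, hGF])
  obtain ⟨e, heF, hwe⟩ := hex
  refine ⟨le_antisymm ?_ (maxw_le hFfin hFne fun x hx => hS.w_le hsc hrep hF hx), e, heF, hwe⟩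
  rw [← hwe]
  exact le_maxw hFfin hFne heF

include hfin hloop hw in
/-- every canonical member belongs to any nested set representing `w` -/
lemma NestedSet.canon_subset (hS : NestedSet M S) (hsc : StrictCompat S a)
    (hrep : Represents M S a w) (hK : K ∈ CanonS M w) : K ∈ S := by
  by_contra hKS
  set m := maxw w K with hm
  have hKL : K ⊆ Lset M w m := CanonS_subset_Lset hfin hw hK
  refine hS.cover_contra hfin (CanonS_nonempty hfin hw hK)
    ((CanonS_flat hfin hloop hw hK).closure) (CanonS_connected hfin hw hK) ?_
  · intro g hg
    obtain ⟨G, hG, hwG⟩ := hrep g ((hKL.trans Lset_subset_ground) hg)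
    have hGL : G ⊆ Lset M w m := by
      intro x hx
      refine ⟨hS.member_subset_ground hG.1 hx, ?_⟩
      calc w x ≤ a G := hS.w_le hsc hrep hG.1 hx
        _ = w g := hwG.symm
        _ ≤ m := (hKL hg).2
    have hGK : G ⊆ K := conn_subset_canon hfin hw (hS.1 G hG.1).2.2 hGL hK hG.2.1 hg
    refine ⟨G, hG.1, hG.2.1, hGK, ?_⟩
    rintro rfl
    exact hKS hG.1
end Uniqueness

section Uniqueness2

variable {M : Matroid α} {w : α → ℝ} {S : Set (Set α)} {a : Set α → ℝ}
  {K F G : Set α} {e g : α}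

variable (hfin : M.E.Finite) (hne : M.E.Nonempty) (hloop : ∀ x ∈ M.E, M.Indep {x})
  (hw : MUltrametric M w)

include hfin hloop hw in
lemma NestedSet.eq_canon (hS : NestedSet M S) (hsc : StrictCompat S a)
    (hrep : Represents M S a w) : S = CanonS M w := by
  refine Set.Subset.antisymm ?_ (fun K hK => hS.canon_subset hfin hloop hw hsc hrep hK)
  intro F hF
  obtain ⟨haF, e, heF, hwe⟩ := hS.label_eq_maxw hfin hsc hrep hF
  have hFE : F ⊆ M.E := hS.member_subset_ground hF
  set t := a F with ht
  have hFL : F ⊆ Lset M w t := fun x hx => ⟨hFE hx, hS.w_le hsc hrep hF hx⟩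
  have heL : e ∈ Lset M w t := hFL heF
  set K := MComponent (M.restrict (Lset M w t)) e with hK
  have hKC : K ∈ CanonS M w := ⟨t, e, heL, rfl⟩
  have hFK : F ⊆ K :=
    connected_subset_mcomponent (hS.1 F hF).2.2 hFL Lset_subset_ground heF
  have hKS : K ∈ S := hS.canon_subset hfin hloop hw hsc hrep hKC
  have haK : a K = t := by
    obtain ⟨haK', x, hxK, hwx⟩ := hS.label_eq_maxw hfin hsc hrep hKS
    have hKL : K ⊆ Lset M w t := by
      intro y hy
      have h := hy.1
      rwa [Matroid.restrict_ground_eq] at h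
    refine le_antisymm ?_ ?_
    · rw [← hwx]; exact (hKL hxK).2
    · rw [haK']
      have hle : w e ≤ maxw w K :=
        le_maxw (hfin.subset (hKL.trans Lset_subset_ground)) ⟨e, hFK heF⟩ (hFK heF)
      exact le_of_eq_of_le hwe.symm hle
  clear_value t K
  rcases eq_or_ne F K with rfl | hne'
  · exact hKC
  · have hlt := hsc F hF K hKS (ssubset_of_subset_of_ne hFK hne')
    rw [haK, ht] at hlt
    exact absurd hlt (lt_irrefl _)

end Uniqueness2

/-- Every `M`-ultrametric on a loopless matroid with finite nonempty ground set has a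
unique representation `w = w^{S,a}` with `S` a nested set and `a` strictly compatible:
such a pair exists, and any two such pairs have the same nested set and the same
weighting on it. -/
theorem stmt7 (M : Matroid α) (hfin : M.E.Finite) (hne : M.E.Nonempty)
    (hloop : ∀ e ∈ M.E, M.Indep {e}) (w : α → ℝ) (hw : MUltrametric M w) :
    (∃ (S : Set (Set α)) (a : Set α → ℝ),
        NestedSet M S ∧ StrictCompat S a ∧ Represents M S a w) ∧
      ∀ (S₁ S₂ : Set (Set α)) (a₁ a₂ : Set α → ℝ),
        NestedSet M S₁ → StrictCompat S₁ a₁ → Represents M S₁ a₁ w →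
        NestedSet M S₂ → StrictCompat S₂ a₂ → Represents M S₂ a₂ w →
        S₁ = S₂ ∧ ∀ F ∈ S₁, a₁ F = a₂ F := by
  constructor
  · exact ⟨CanonS M w, maxw w, CanonS_nestedSet hfin hne hloop hw,
      CanonS_strictCompat hfin hw, CanonS_represents hfin hw⟩
  · intro S₁ S₂ a₁ a₂ h₁ hc₁ hr₁ h₂ hc₂ hr₂
    have e₁ := h₁.eq_canon hfin hloop hw hc₁ hr₁
    have e₂ := h₂.eq_canon hfin hloop hw hc₂ hr₂
    refine ⟨e₁.trans e₂.symm, ?_⟩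
    intro F hF
    have q₁ := (h₁.label_eq_maxw hfin hc₁ hr₁ hF).1
    have hF₂ : F ∈ S₂ := by rw [e₂, ← e₁]; exact hF
    have q₂ := (h₂.label_eq_maxw hfin hc₂ hr₂ hF₂).1
    rw [q₁, q₂]
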